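/- The smallest cumulative extension of a strongly cumulative finitary operation is strongly cumulative: if F is a finitary operation satisfying finitary Strong Cumulativity, then the operation C defined by C(X) = F(A) when there is a finite A ⊆ Cn(X) with Cn(X) ⊆ F(A) and C(X) = Cn(X) otherwise, satisfies Strong Cumulativity. -/

import Mathlib

/-- the smallest cumulative extension of a strongly cumulative
finitary operation is strongly cumulative. -/
theorem stmt_11 {L : Type*} (Cn F C : Set L → Set L)
    (hInc : ∀ X : Set L, X ⊆ Cn X)
    (hMono : ∀ X Y : Set L, X ⊆ Y → Cn X ⊆ Cn Y)
    (hIdem : ∀ X : Set L, Cn (Cn X) = Cn X)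
    (hCpt : ∀ (X : Set L) (a : L), a ∈ Cn X → ∃ A : Set L, A ⊆ X ∧ A.Finite ∧ a ∈ Cn A)
    -- F is a finitary inference operation
    (hFInc : ∀ A : Set L, A.Finite → A ⊆ F A)
    (hFLAbs : ∀ A : Set L, A.Finite → Cn (F A) = F A)
    (hFRAbs : ∀ A B : Set L, A.Finite → B.Finite → Cn A = Cn B → F A = F B)
    -- F is strongly cumulative: supraclassical and satisfies the finitary Loop
    (hFSup : ∀ A : Set L, A.Finite → Cn A ⊆ F A)
    (hFLoop : ∀ (n : ℕ) [NeZero n] (A : Fin n → Set L),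
      (∀ i, (A i).Finite) → (∀ i : Fin n, A i ⊆ F (A (i + 1))) →
      ∀ i j : Fin n, F (A i) = F (A j))
    -- C is the smallest cumulative extension of F
    (hC1 : ∀ (X A : Set L), A.Finite → A ⊆ Cn X → Cn X ⊆ F A → C X = F A)
    (hC2 : ∀ X : Set L, (¬ ∃ A : Set L, A.Finite ∧ A ⊆ Cn X ∧ Cn X ⊆ F A) → C X = Cn X) :
    -- C satisfies Strong Cumulativity
    ∀ (n : ℕ) [NeZero n] (X : Fin n → Set L),
      (∀ i : Fin n, X i ⊆ C (X (i + 1))) →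
      ∀ i j : Fin n, C (X i) = C (X j) := by
  intro n hn X hX
  classical
  letI := Fin.instCommRing n
  have cast1 : ∀ (i : Fin n) (m : ℕ), i + ((m + 1 : ℕ) : Fin n) = i + (m : Fin n) + 1 := by
    intro i m; push_cast; ring
  have cast1' : ∀ (i : Fin n) (m : ℕ), i + ((m + 1 : ℕ) : Fin n) = i + 1 + (m : Fin n) := by
    intro i m; push_cast; ring
  -- basic facts about C
  have hCC : ∀ Y : Set L, Cn Y ⊆ C Y := by
    intro Y
    by_cases h : ∃ A : Set L, A.Finite ∧ A ⊆ Cn Y ∧ Cn Y ⊆ F A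
    · obtain ⟨A, hf, h1, h2⟩ := h
      rw [hC1 Y A hf h1 h2]; exact h2
    · rw [hC2 Y h]
  have hCl : ∀ Y : Set L, Cn (C Y) = C Y := by
    intro Y
    by_cases h : ∃ A : Set L, A.Finite ∧ A ⊆ Cn Y ∧ Cn Y ⊆ F A
    · obtain ⟨A, hf, h1, h2⟩ := h
      rw [hC1 Y A hf h1 h2]; exact hFLAbs A hf
    · rw [hC2 Y h]; exact hIdem Y
  have hStep : ∀ i : Fin n, Cn (X i) ⊆ C (X (i + 1)) := by
    intro i
    have h := hMono _ _ (hX i)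
    rwa [hCl] at h
  -- fancy indices: those with a finite witness
  set fancy : Fin n → Prop := fun i => ∃ B : Set L, B.Finite ∧ B ⊆ Cn (X i) ∧ Cn (X i) ⊆ F B
    with hfancy
  have hplainC : ∀ i, ¬ fancy i → C (X i) = Cn (X i) := fun i h => hC2 _ h
  let A : Fin n → Set L := fun i => if h : fancy i then h.choose else ∅
  have hA : ∀ i, fancy i → (A i).Finite ∧ A i ⊆ Cn (X i) ∧ Cn (X i) ⊆ F (A i) := by
    intro i h
    simp only [A, dif_pos h]
    exact h.choose_spec
  have hCfancy : ∀ i, fancy i → C (X i) = F (A i) := by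
    intro i h
    obtain ⟨h1, h2, h3⟩ := hA i h
    exact hC1 _ _ h1 h2 h3
  -- forward chain lemma
  have Fwd : ∀ m : ℕ, ∀ i : Fin n, (∀ t : ℕ, 0 < t → t < m → ¬ fancy (i + (t : Fin n))) →
      Cn (X i) ⊆ C (X (i + (m : Fin n))) := by
    intro m
    induction m with
    | zero => intro i _; simpa using hCC (X i)
    | succ m ih =>
      intro i hp
      rcases Nat.eq_zero_or_pos m with hm | hm
      · subst hm
        simpa using hStep i
      · have h1 : ¬ fancy (i + 1) := by
          have h := hp 1 one_pos (by omega)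
          simpa using h
        have h2 : Cn (X i) ⊆ Cn (X (i + 1)) := by
          have h := hStep i
          rwa [hplainC _ h1] at h
        have h3 : Cn (X (i + 1)) ⊆ C (X (i + 1 + (m : Fin n))) := by
          refine ih (i + 1) ?_
          intro t ht ht' hc
          refine hp (t + 1) (by omega) (by omega) ?_
          rw [cast1']
          exact hc
        rw [cast1']
        exact h2.trans h3
  -- backward chain lemma
  have Bwd : ∀ m : ℕ, ∀ i : Fin n, fancy i →
      (∀ t : ℕ, 0 < t → t ≤ m → ¬ fancy (i + (t : Fin n))) →
      A i ⊆ Cn (X (i + (m : Fin n))) := by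
    intro m
    induction m with
    | zero => intro i hi _; simpa using (hA i hi).2.1
    | succ m ih =>
      intro i hi hp
      have h1 : A i ⊆ Cn (X (i + (m : Fin n))) := ih i hi (fun t ht ht' => hp t ht (by omega))
      have h2 : ¬ fancy (i + (m : Fin n) + 1) := by
        have h := hp (m + 1) (by omega) le_rfl
        rwa [cast1] at h
      have h3 : Cn (X (i + (m : Fin n))) ⊆ C (X (i + (m : Fin n) + 1)) := hStep _
      rw [hplainC _ h2] at h3
      rw [cast1]
      exact h1.trans h3
  by_cases hS : ∃ k, fancy k
  · -- some fancy index exists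
    obtain ⟨k, hk⟩ := hS
    have hd : ∀ i : Fin n, ∃ m : ℕ, fancy (i + (m : Fin n)) := by
      intro i
      refine ⟨(k - i).val, ?_⟩
      rw [Fin.cast_val_eq_self, add_comm, sub_add_cancel]
      exact hk
    let d : Fin n → ℕ := fun i => Nat.find (hd i)
    have hdf : ∀ i, fancy (i + ((d i : ℕ) : Fin n)) := fun i => Nat.find_spec (hd i)
    have hdm : ∀ i, ∀ t, t < d i → ¬ fancy (i + (t : Fin n)) :=
      fun i t ht => Nat.find_min (hd i) ht
    have hd0 : ∀ i, fancy i → d i = 0 := by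
      intro i hi
      refine Nat.find_eq_zero (hd i) |>.mpr ?_
      simpa using hi
    let Bw : Fin n → Set L := fun i => A (i + ((d i : ℕ) : Fin n))
    have hBwfin : ∀ i, (Bw i).Finite := fun i => (hA _ (hdf i)).1
    have hBwfancy : ∀ i, fancy i → Bw i = A i := by
      intro i hi
      show A (i + ((d i : ℕ) : Fin n)) = A i
      rw [hd0 i hi]
      simp
    -- C1 : forward chain to next fancy index
    have C1 : ∀ i, Cn (X i) ⊆ F (Bw i) := by
      intro i
      have h := Fwd (d i) i (fun t _ ht' => hdm i t ht')
      rwa [hCfancy _ (hdf i)] at h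
    -- Bw is constant on plain steps
    have hdrec : ∀ i : Fin n, ¬ fancy i → Bw i = Bw (i + 1) := by
      intro i hi
      have hd1 : d i ≠ 0 := by
        intro h
        apply hi
        have h2 := hdf i
        rw [h] at h2
        simpa using h2
      have hfs : fancy (i + 1 + ((d i - 1 : ℕ) : Fin n)) := by
        have h2 := hdf i
        rw [show i + ((d i : ℕ) : Fin n) = i + 1 + ((d i - 1 : ℕ) : Fin n) by
          rw [← cast1']; congr 1; congr 1; omega] at h2
        exact h2
      have hle : d (i + 1) ≤ d i - 1 := Nat.find_le hfs
      have hge : ¬ d (i + 1) < d i - 1 := by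
        intro hlt
        refine hdm i (d (i + 1) + 1) (by omega) ?_
        rw [cast1']
        exact hdf (i + 1)
      have heq : d (i + 1) = d i - 1 := by omega
      show A (i + ((d i : ℕ) : Fin n)) = A (i + 1 + ((d (i + 1) : ℕ) : Fin n))
      rw [heq, ← cast1', show d i - 1 + 1 = d i from by omega]
    -- the loop condition for Bw
    have C3 : ∀ i : Fin n, Bw i ⊆ F (Bw (i + 1)) := by
      intro i
      by_cases hi : fancy i
      · rw [hBwfancy i hi]
        have h1 : A i ⊆ C (X (i + 1)) := ((hA i hi).2.1).trans (hStep i)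
        by_cases hi1 : fancy (i + 1)
        · rwa [hCfancy _ hi1, ← hBwfancy _ hi1] at h1
        · rw [hplainC _ hi1] at h1
          exact h1.trans (C1 (i + 1))
      · rw [hdrec i hi]
        exact hFInc _ (hBwfin (i + 1))
    have hG : ∀ i j : Fin n, F (Bw i) = F (Bw j) := hFLoop n Bw hBwfin C3
    -- every index is fancy
    have hall : ∀ i : Fin n, fancy i := by
      intro i
      by_contra hi
      have he : ∃ m : ℕ, fancy (i - (m : Fin n)) := by
        refine ⟨(i - k).val, ?_⟩
        rw [Fin.cast_val_eq_self, sub_sub_cancel]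
        exact hk
      set e : ℕ := Nat.find he with hedef
      have hef : fancy (i - (e : Fin n)) := Nat.find_spec he
      have hem : ∀ t, t < e → ¬ fancy (i - (t : Fin n)) := fun t ht => Nat.find_min he ht
      have he1 : e ≠ 0 := by
        intro h
        apply hi
        rw [h] at hef
        simpa using hef
      set j : Fin n := i - (e : Fin n) with hjdef
      have hji : j + (e : Fin n) = i := by rw [hjdef, sub_add_cancel]
      have hsub : A j ⊆ Cn (X i) := by
        have h := Bwd e j hef ?_
        · rwa [hji] at h
        · intro t ht ht'
          have hjt : j + (t : Fin n) = i - ((e - t : ℕ) : Fin n) := by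
            rw [hjdef, Nat.cast_sub ht']
            ring
          rw [hjt]
          rcases Nat.lt_or_ge (e - t) e with h1 | h1
          · exact hem _ h1
          · have : e = t := by omega
            subst this
            simpa using hi
      have hsup : Cn (X i) ⊆ F (A j) := by
        have h := C1 i
        rw [hG i j, hBwfancy j hef] at h
        exact h
      exact hi ⟨A j, (hA j hef).1, hsub, hsup⟩
    intro i j
    rw [hCfancy i (hall i), hCfancy j (hall j), ← hBwfancy i (hall i), ← hBwfancy j (hall j)]
    exact hG i j
  · -- no fancy index: C = Cn everywhere
    have key : ∀ i j : Fin n, C (X i) ⊆ C (X j) := by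
      intro i j
      have h := Fwd (j - i).val i (fun t _ _ => fun hc => hS ⟨_, hc⟩)
      rw [Fin.cast_val_eq_self, add_comm, sub_add_cancel] at h
      rw [hplainC i (fun hc => hS ⟨_, hc⟩)]
      exact h
    intro i j
    exact (key i j).antisymm (key j i)
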